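/- (Dominated convergence for gauge integrals) If g₁, g₂, fⱼ are real HK-integrable on a brick I with g₁ ≤ fⱼ ≤ g₂ for all j, and f(P) = lim_{j→∞} fⱼ(P) exists almost everywhere, then f is HK-integrable on I and ∫_I f dμ = lim_{j→∞} ∫_I fⱼ dμ. -/

import Mathlib

open Set Filter

/-- A brick (compact non-degenerate interval) in `ι → ℝ`. -/
structure Brick (ι : Type*) [Fintype ι] where
  lower : ι → ℝ
  upper : ι → ℝ
  lt : ∀ j, lower j < upper j

variable {ι : Type*} [Fintype ι]

namespace Brick

/-- The underlying closed set of a brick. -/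
def toSet (I : Brick ι) : Set (ι → ℝ) := {x | ∀ j, x j ∈ Set.Icc (I.lower j) (I.upper j)}

/-- The open interior of a brick. -/
def inter (I : Brick ι) : Set (ι → ℝ) := {x | ∀ j, x j ∈ Set.Ioo (I.lower j) (I.upper j)}

/-- The volume of a brick. -/
noncomputable def vol (I : Brick ι) : ℝ := ∏ j, (I.upper j - I.lower j)

end Brick

/-- A tagged division of a brick `I`: finitely many non-overlapping sub-bricks covering `I`,
each with a tag point belonging to it. -/
structure TaggedDiv {ι : Type*} [Fintype ι] (I : Brick ι) where
  pieces : Finset (Brick ι × (ι → ℝ))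
  subset_of_mem : ∀ p ∈ pieces, (p.1 : Brick ι).toSet ⊆ I.toSet
  tag_mem : ∀ p ∈ pieces, p.2 ∈ (p.1 : Brick ι).toSet
  nonoverlap : ∀ p ∈ pieces, ∀ q ∈ pieces, p ≠ q →
    (p.1 : Brick ι).inter ∩ (q.1 : Brick ι).inter = ∅
  cover : I.toSet = ⋃ p ∈ pieces, (p.1 : Brick ι).toSet

/-- A gauge on a brick: a function positive at each point of the brick. -/
def IsGauge (I : Brick ι) (δ : (ι → ℝ) → ℝ) : Prop := ∀ x ∈ I.toSet, 0 < δ x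

/-- A tagged division is compatible with the gauge `δ` if each brick lies in the open ball
of radius `δ` about its tag. -/
def Compat {I : Brick ι} (D : TaggedDiv I) (δ : (ι → ℝ) → ℝ) : Prop :=
  ∀ p ∈ D.pieces, (p.1 : Brick ι).toSet ⊆ Metric.ball p.2 (δ p.2)

/-- The Riemann sum of `f` over a tagged division. -/
noncomputable def riemannSum {I : Brick ι} (f : (ι → ℝ) → ℝ) (D : TaggedDiv I) : ℝ :=
  ∑ p ∈ D.pieces, f p.2 * (p.1 : Brick ι).vol

/-- `f` has Henstock–Kurzweil integral `A` on the brick `I`. -/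
def HasHK (I : Brick ι) (f : (ι → ℝ) → ℝ) (A : ℝ) : Prop :=
  ∀ ε > 0, ∃ δ : (ι → ℝ) → ℝ, IsGauge I δ ∧
    ∀ D : TaggedDiv I, Compat D δ → |riemannSum f D - A| < ε

open scoped ENNReal Classical

/-- The sum of `|h|` over a tagged division, for an interval-point function `h`. -/
noncomputable def varSum {I : Brick ι} (h : Brick ι → (ι → ℝ) → ℝ) (D : TaggedDiv I) : ℝ :=
  ∑ p ∈ D.pieces, |h p.1 p.2|

/-- The (Henstock) variation of an interval-point function `h` on a brick `I`. -/
noncomputable def variation (I : Brick ι) (h : Brick ι → (ι → ℝ) → ℝ) : ℝ≥0∞ :=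
  ⨅ δ ∈ {δ : (ι → ℝ) → ℝ | IsGauge I δ},
    ⨆ D ∈ {D : TaggedDiv I | Compat D δ}, ENNReal.ofReal (varSum h D)

/-- The variation of `h` on `I` with tags restricted to the set `X`. -/
noncomputable def variationOn (I : Brick ι) (h : Brick ι → (ι → ℝ) → ℝ)
    (X : Set (ι → ℝ)) : ℝ≥0∞ :=
  variation I (fun J P => if P ∈ X then h J P else 0)

/-- The outer measure of a set `X` in the brick `I`, defined via the Henstock variation of
the volume function restricted to `X`. -/
noncomputable def mustar (I : Brick ι) (X : Set (ι → ℝ)) : ℝ≥0∞ :=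
  variationOn I (fun J _ => J.vol) X

/-! ### Bridge between `Brick`/`TaggedDiv`/`HasHK` and mathlib's `BoxIntegral` -/

open BoxIntegral MeasureTheory

section Bridge

lemma exists_pos_le_forall {g : ι → ℝ} (hg : ∀ i, 0 < g i) : ∃ ε > 0, ∀ i, ε ≤ g i := by
  rcases isEmpty_or_nonempty ι with h | h
  · exact ⟨1, one_pos, fun i => (IsEmpty.false i).elim⟩
  · refine ⟨Finset.univ.inf' Finset.univ_nonempty g, ?_, fun i =>
      Finset.inf'_le _ (Finset.mem_univ i)⟩
    exact (Finset.lt_inf'_iff _).2 fun i _ => hg i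

/-- The mathlib box associated to a brick. -/
def Brick.box (I : Brick ι) : Box ι := ⟨I.lower, I.upper, I.lt⟩

/-- The brick associated to a mathlib box. -/
def BoxIntegral.Box.brick (J : Box ι) : Brick ι := ⟨J.lower, J.upper, J.lower_lt_upper⟩

lemma Brick.Icc_box (I : Brick ι) : Box.Icc I.box = I.toSet := by
  ext x
  simp only [Box.Icc_eq_pi, Set.mem_pi, Set.mem_univ, forall_true_left, Brick.toSet,
    Set.mem_setOf_eq, Set.mem_Icc, Brick.box]

lemma BoxIntegral.Box.toSet_brick (J : Box ι) : J.brick.toSet = Box.Icc J := by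
  ext x
  simp only [Box.Icc_eq_pi, Set.mem_pi, Set.mem_univ, forall_true_left, Brick.toSet,
    Set.mem_setOf_eq, Set.mem_Icc, Box.brick]

lemma BoxIntegral.Box.inter_brick (J : Box ι) : J.brick.inter = Box.Ioo J := by
  ext x
  simp only [Box.Ioo, Brick.inter, Box.brick, Set.mem_pi, OrderHom.coe_mk, Set.mem_univ,
    forall_true_left, Set.mem_setOf_eq, Set.mem_Ioo]
  change _ ↔ x ∈ Set.pi Set.univ fun i => Set.Ioo (J.lower i) (J.upper i)
  simp

lemma BoxIntegral.Box.vol_brick (J : Box ι) :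
    J.brick.vol = (volume : Measure (ι → ℝ)).toBoxAdditive J := by
  rw [Box.volume_apply]; rfl

lemma BoxIntegral.Box.brick_inj : Function.Injective (Box.brick : Box ι → Brick ι) := by
  rintro ⟨l, u, h⟩ ⟨l', u', h'⟩ H
  simpa [Box.brick, Box.mk.injEq] using And.intro (congrArg Brick.lower H)
    (congrArg Brick.upper H)

lemma Brick.box_inj : Function.Injective (Brick.box : Brick ι → Box ι) := by
  rintro ⟨l, u, h⟩ ⟨l', u', h'⟩ H
  simpa [Brick.box, Brick.mk.injEq] using And.intro (congrArg Box.lower H)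
    (congrArg Box.upper H)

lemma Brick.inter_nonempty (b : Brick ι) : b.inter.Nonempty := by
  refine ⟨fun i => (b.lower i + b.upper i) / 2, fun i => ?_⟩
  constructor <;> nlinarith [b.lt i]

lemma Brick.upper_mem_toSet (I : Brick ι) : I.upper ∈ I.toSet :=
  fun j => ⟨(I.lt j).le, le_rfl⟩

lemma BoxIntegral.Box.Icc_subset_closure (J : Box ι) :
    Box.Icc J ⊆ closure (J : Set (ι → ℝ)) := by
  intro x hx
  rw [Box.Icc_eq_pi] at hx
  rw [Metric.mem_closure_iff]
  intro ε hε
  set e := ε / 2 with he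
  have he0 : 0 < e := by positivity
  refine ⟨fun i => max (x i) (min (J.lower i + e) (J.upper i)), fun i => ?_, ?_⟩
  · have hxi := hx i (Set.mem_univ i)
    constructor
    · exact lt_max_of_lt_right (lt_min (by linarith) (J.lower_lt_upper i))
    · exact max_le hxi.2 (min_le_right _ _)
  · rw [dist_pi_lt_iff hε]
    intro i
    have hxi := hx i (Set.mem_univ i)
    rw [Real.dist_eq, abs_of_nonpos (by simp)]
    have : max (x i) (min (J.lower i + e) (J.upper i)) ≤ x i + e :=
      max_le (by linarith) (le_trans (min_le_left _ _) (by linarith [hxi.1]))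
    linarith

end Bridge
section OfBox

open BoxIntegral MeasureTheory

variable {I : Brick ι}

/-- Convert a mathlib Henstock tagged partition into a `TaggedDiv`. -/
noncomputable def TaggedDiv.ofBox (I : Brick ι) (π : TaggedPrepartition I.box)
    (hpart : π.IsPartition) (hH : π.IsHenstock) : TaggedDiv I where
  pieces := π.boxes.image fun J => (J.brick, π.tag J)
  subset_of_mem := by
    intro p hp
    rcases Finset.mem_image.1 hp with ⟨J, hJ, rfl⟩
    rw [Box.toSet_brick, ← Brick.Icc_box]
    exact Box.le_iff_Icc.1 (π.le_of_mem hJ)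
  tag_mem := by
    intro p hp
    rcases Finset.mem_image.1 hp with ⟨J, hJ, rfl⟩
    rw [Box.toSet_brick]
    exact hH J hJ
  nonoverlap := by
    intro p hp q hq hne
    rcases Finset.mem_image.1 hp with ⟨J, hJ, rfl⟩
    rcases Finset.mem_image.1 hq with ⟨K, hK, rfl⟩
    have hJK : J ≠ K := by rintro rfl; exact hne rfl
    have hd : Disjoint (J : Set (ι → ℝ)) K :=
      π.toPrepartition.disjoint_coe_of_mem hJ hK hJK
    rw [Box.inter_brick, Box.inter_brick, ← Set.disjoint_iff_inter_eq_empty]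
    exact hd.mono J.Ioo_subset_coe K.Ioo_subset_coe
  cover := by
    apply Set.Subset.antisymm
    · intro x hx
      have h1 : x ∈ closure (I.box : Set (ι → ℝ)) :=
        I.box.Icc_subset_closure (by rwa [Brick.Icc_box])
      have h2 : (I.box : Set (ι → ℝ)) ⊆ ⋃ J ∈ π.boxes, Box.Icc J := by
        intro y hy
        rcases hpart y hy with ⟨J, hJ, hyJ⟩
        exact Set.mem_biUnion hJ (Box.coe_subset_Icc hyJ)
      have hcl : IsClosed (⋃ J ∈ π.boxes, Box.Icc J) :=
        (π.boxes.finite_toSet).isClosed_biUnion fun J _ => Box.isCompact_Icc J |>.isClosed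
      have h3 : x ∈ ⋃ J ∈ π.boxes, Box.Icc J :=
        hcl.closure_subset ((closure_mono h2) h1)
      rcases Set.mem_iUnion₂.1 h3 with ⟨J, hJ, hxJ⟩
      refine Set.mem_iUnion₂.2 ⟨(J.brick, π.tag J), ?_, ?_⟩
      · exact Finset.mem_image.2 ⟨J, hJ, rfl⟩
      · rwa [Box.toSet_brick]
    · refine Set.iUnion₂_subset fun p hp => ?_
      rcases Finset.mem_image.1 hp with ⟨J, hJ, rfl⟩
      rw [Box.toSet_brick, ← Brick.Icc_box]
      exact Box.le_iff_Icc.1 (π.le_of_mem hJ)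

lemma TaggedDiv.pieces_ofBox (π : BoxIntegral.TaggedPrepartition I.box) (h1 : π.IsPartition)
    (h2 : π.IsHenstock) :
    (TaggedDiv.ofBox I π h1 h2).pieces = π.boxes.image (fun J => (J.brick, π.tag J)) := rfl

lemma TaggedDiv.riemannSum_ofBox (π : TaggedPrepartition I.box) (hpart : π.IsPartition)
    (hH : π.IsHenstock) (f : (ι → ℝ) → ℝ) :
    riemannSum f (TaggedDiv.ofBox I π hpart hH) =
      integralSum f BoxAdditiveMap.volume π := by
  rw [riemannSum, TaggedDiv.ofBox, integralSum]
  rw [Finset.sum_image (fun J _ K _ h => Box.brick_inj (congrArg Prod.fst h))]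
  refine Finset.sum_congr rfl fun J _ => ?_
  rw [BoxAdditiveMap.volume_apply, smul_eq_mul, Box.vol_brick, Box.volume_apply, mul_comm]

lemma TaggedDiv.compat_ofBox (π : TaggedPrepartition I.box) (hpart : π.IsPartition)
    (hH : π.IsHenstock) {r : (ι → ℝ) → Set.Ioi (0 : ℝ)} (hsub : π.IsSubordinate r)
    {δ : (ι → ℝ) → ℝ} (hδ : ∀ x ∈ I.toSet, (r x : ℝ) < δ x) :
    Compat (TaggedDiv.ofBox I π hpart hH) δ := by
  intro p hp
  rcases Finset.mem_image.1 hp with ⟨J, hJ, rfl⟩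
  rw [Box.toSet_brick]
  have htag : π.tag J ∈ I.toSet := by rw [← Brick.Icc_box]; exact π.tag_mem_Icc J
  exact (hsub J hJ).trans (Metric.closedBall_subset_ball (hδ _ htag))

end OfBox
section ToBox

open BoxIntegral MeasureTheory

variable {I : Brick ι}

lemma TaggedDiv.fst_inj (D : TaggedDiv I) {p q : Brick ι × (ι → ℝ)}
    (hp : p ∈ D.pieces) (hq : q ∈ D.pieces) (h : p.1 = q.1) : p = q := by
  by_contra hne
  have := D.nonoverlap p hp q hq hne
  rw [h, Set.inter_self] at this
  exact Set.not_nonempty_empty (this ▸ q.1.inter_nonempty)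

/-- The tag function for the tagged prepartition associated to a `TaggedDiv`. -/
noncomputable def TaggedDiv.tagFn (D : TaggedDiv I) (J : Box ι) : ι → ℝ :=
  if h : ∃ p, p ∈ D.pieces ∧ p.1.box = J then h.choose.2 else I.upper

lemma TaggedDiv.tagFn_eq (D : TaggedDiv I) {p : Brick ι × (ι → ℝ)} (hp : p ∈ D.pieces) :
    D.tagFn p.1.box = p.2 := by
  have h : ∃ q, q ∈ D.pieces ∧ q.1.box = p.1.box := ⟨p, hp, rfl⟩
  rw [TaggedDiv.tagFn, dif_pos h]
  have hspec := h.choose_spec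
  have h1 : h.choose.1 = p.1 := Brick.box_inj hspec.2
  exact congrArg Prod.snd (D.fst_inj hspec.1 hp h1)

lemma TaggedDiv.tagFn_mem_Icc (D : TaggedDiv I) (J : Box ι) :
    D.tagFn J ∈ Box.Icc I.box := by
  rw [Brick.Icc_box]
  rw [TaggedDiv.tagFn]
  split_ifs with h
  · have hspec := h.choose_spec
    exact D.subset_of_mem _ hspec.1 (D.tag_mem _ hspec.1)
  · exact I.upper_mem_toSet

lemma TaggedDiv.coe_box_disjoint {b c : Brick ι} (h : b.inter ∩ c.inter = ∅) :
    Disjoint (b.box : Set (ι → ℝ)) (c.box : Set (ι → ℝ)) := by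
  rw [Set.disjoint_iff_inter_eq_empty]
  by_contra hne
  rcases Set.nonempty_iff_ne_empty.2 hne with ⟨x, hxb, hxc⟩
  have hb : ∀ i, 0 < min (x i - b.lower i) (x i - c.lower i) := by
    intro i
    have h1 : b.lower i < x i := ((hxb : x ∈ b.box) i).1
    have h2 : c.lower i < x i := ((hxc : x ∈ c.box) i).1
    exact lt_min (by linarith) (by linarith)
  rcases exists_pos_le_forall hb with ⟨ε, hε, hle⟩
  have hmem : (fun i => x i - ε / 2) ∈ b.inter ∩ c.inter := by
    constructor <;> intro i <;>
    · have h1u : x i ≤ b.upper i := ((hxb : x ∈ b.box) i).2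
      have h2u : x i ≤ c.upper i := ((hxc : x ∈ c.box) i).2
      have h1l : b.lower i < x i := ((hxb : x ∈ b.box) i).1
      have h2l : c.lower i < x i := ((hxc : x ∈ c.box) i).1
      have h3 := hle i
      have h4 := min_le_left (x i - b.lower i) (x i - c.lower i)
      have h5 := min_le_right (x i - b.lower i) (x i - c.lower i)
      show x i - ε / 2 ∈ Set.Ioo _ _
      exact ⟨by linarith, by linarith⟩
  rw [h] at hmem
  exact hmem

/-- Convert a `TaggedDiv` into a mathlib tagged prepartition. -/
noncomputable def TaggedDiv.toBox (D : TaggedDiv I) : TaggedPrepartition I.box where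
  boxes := D.pieces.image fun p => p.1.box
  le_of_mem' := by
    intro J hJ
    rcases Finset.mem_image.1 hJ with ⟨p, hp, rfl⟩
    rw [Box.le_iff_Icc, Brick.Icc_box, Brick.Icc_box]
    exact D.subset_of_mem p hp
  pairwiseDisjoint := by
    intro J hJ K hK hne
    rcases Finset.mem_image.1 hJ with ⟨p, hp, rfl⟩
    rcases Finset.mem_image.1 hK with ⟨q, hq, rfl⟩
    have hpq : p ≠ q := by rintro rfl; exact hne rfl
    have hpq1 : p.1 ≠ q.1 := fun h => hpq (D.fst_inj hp hq h)
    exact TaggedDiv.coe_box_disjoint (D.nonoverlap p hp q hq (by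
      intro h; exact hpq1 (congrArg Prod.fst h)))
  tag := D.tagFn
  tag_mem_Icc := D.tagFn_mem_Icc

lemma TaggedDiv.mem_toBox (D : TaggedDiv I) {J : Box ι} :
    J ∈ D.toBox ↔ ∃ p ∈ D.pieces, p.1.box = J := by
  show J ∈ D.pieces.image (fun p => p.1.box) ↔ _
  exact Finset.mem_image

lemma TaggedDiv.toBox_isPartition (D : TaggedDiv I) : D.toBox.IsPartition := by
  intro x hx
  -- `x` lies in the half-open box `I.box`
  have hxI : x ∈ I.toSet := by
    rw [← Brick.Icc_box]; exact Box.coe_subset_Icc hx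
  -- auxiliary: a positive lower bound for `x - lower`
  have hpos : ∀ i, 0 < x i - I.lower i := fun i => by
    have h : I.lower i < x i := ((hx : x ∈ I.box) i).1
    linarith
  rcases exists_pos_le_forall hpos with ⟨ε₀, hε₀, hε₀le⟩
  have hyI : ∀ ε, 0 < ε → ε ≤ ε₀ → (fun i => x i - ε) ∈ I.toSet := by
    intro ε hε hεle i
    have h1 := hε₀le i
    have h2 := (hxI i).2
    show x i - ε ∈ Set.Icc (I.lower i) (I.upper i)
    exact ⟨by linarith, by linarith⟩
  -- find a piece that contains `x - ε` for arbitrarily small `ε`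
  have key : ∃ p ∈ D.pieces, ∀ δ, 0 < δ →
      ∃ ε, 0 < ε ∧ ε < δ ∧ (fun i => x i - ε) ∈ p.1.toSet := by
    by_contra hcon
    push_neg at hcon
    have hx' : x ∈ ⋃ p ∈ D.pieces, (p.1 : Brick ι).toSet := D.cover ▸ hxI
    rcases Set.mem_iUnion₂.1 hx' with ⟨p₀, hp₀, _⟩
    have hne : D.pieces.Nonempty := ⟨p₀, hp₀⟩
    choose δp hδp hbad using hcon
    set δ' : ℝ := D.pieces.inf' hne (fun p => if h : p ∈ D.pieces then δp p h else 1) with hδ'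
    have hδ'pos : 0 < δ' := by
      rw [hδ']
      refine (Finset.lt_inf'_iff _).2 fun p hp => ?_
      rw [dif_pos hp]; exact hδp p hp
    set ε := min δ' ε₀ / 2 with hε
    have hεpos : 0 < ε := by positivity
    have hεle : ε ≤ ε₀ := by
      rw [hε]; have := min_le_right δ' ε₀; linarith
    have hy := hyI ε hεpos hεle
    have : (fun i => x i - ε) ∈ ⋃ p ∈ D.pieces, (p.1 : Brick ι).toSet := D.cover ▸ hy
    rcases Set.mem_iUnion₂.1 this with ⟨p, hp, hyp⟩
    have hεδ : ε < δp p hp := by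
      have h1 : δ' ≤ δp p hp := by
        have := Finset.inf'_le (fun p => if h : p ∈ D.pieces then δp p h else 1) hp
        rwa [dif_pos hp] at this
      have h2 : ε < δ' := by
        rw [hε]; have := min_le_left δ' ε₀; linarith
      linarith
    exact hbad p hp ε hεpos hεδ hyp
  rcases key with ⟨p, hp, hkey⟩
  refine ⟨p.1.box, (D.mem_toBox).2 ⟨p, hp, rfl⟩, fun i => ?_⟩
  show x i ∈ Set.Ioc (p.1.lower i) (p.1.upper i)
  constructor
  · rcases hkey 1 one_pos with ⟨ε, hε, _, hyp⟩
    have h5 : p.1.lower i ≤ x i - ε := (hyp i).1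
    linarith
  · refine le_of_forall_pos_le_add fun δ hδ => ?_
    rcases hkey δ hδ with ⟨ε, hε, hεδ, hyp⟩
    have h5 : x i - ε ≤ p.1.upper i := (hyp i).2
    linarith

lemma TaggedDiv.toBox_isHenstock (D : TaggedDiv I) : D.toBox.IsHenstock := by
  intro J hJ
  rcases (D.mem_toBox).1 hJ with ⟨p, hp, rfl⟩
  show D.tagFn p.1.box ∈ Box.Icc p.1.box
  rw [D.tagFn_eq hp, Brick.Icc_box]
  exact D.tag_mem p hp

lemma TaggedDiv.toBox_isSubordinate (D : TaggedDiv I) {δ : (ι → ℝ) → ℝ}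
    (hc : Compat D δ) (r : (ι → ℝ) → Set.Ioi (0 : ℝ))
    (hr : ∀ x ∈ I.toSet, δ x ≤ (r x : ℝ)) : D.toBox.IsSubordinate r := by
  intro J hJ
  rcases (D.mem_toBox).1 hJ with ⟨p, hp, rfl⟩
  show Box.Icc p.1.box ⊆ Metric.closedBall (D.tagFn p.1.box) (r (D.tagFn p.1.box))
  rw [D.tagFn_eq hp, Brick.Icc_box]
  have htag : p.2 ∈ I.toSet := D.subset_of_mem p hp (D.tag_mem p hp)
  exact (hc p hp).trans ((Metric.ball_subset_closedBall).trans
    (Metric.closedBall_subset_closedBall (hr _ htag)))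

lemma TaggedDiv.integralSum_toBox (D : TaggedDiv I) (f : (ι → ℝ) → ℝ) :
    integralSum f BoxAdditiveMap.volume D.toBox = riemannSum f D := by
  have hb : D.toBox.boxes = D.pieces.image (fun p => p.1.box) := rfl
  rw [integralSum, riemannSum, hb,
    Finset.sum_image (fun p hp q hq h => D.fst_inj hp hq (Brick.box_inj h))]
  refine Finset.sum_congr rfl fun p hp => ?_
  have ht : D.toBox.tag p.1.box = p.2 := D.tagFn_eq hp
  rw [ht, BoxAdditiveMap.volume_apply]
  show (∏ j, (p.1.upper j - p.1.lower j)) • f p.2 = f p.2 * p.1.vol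
  rw [smul_eq_mul, mul_comm]
  rfl

end ToBox
section BridgeMain

open BoxIntegral MeasureTheory

variable {I : Brick ι}

lemma henstock_bRiemann : IntegrationParams.Henstock.bRiemann = false := rfl
lemma henstock_bHenstock : IntegrationParams.Henstock.bHenstock = true := rfl
lemma henstock_bDistortion : IntegrationParams.Henstock.bDistortion = false := rfl

theorem hasHK_iff_hasIntegral {f : (ι → ℝ) → ℝ} {A : ℝ} :
    HasHK I f A ↔
      HasIntegral I.box IntegrationParams.Henstock f BoxAdditiveMap.volume A := by
  constructor
  · intro h
    rw [hasIntegral_iff]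
    intro ε hε
    obtain ⟨δ, hgauge, hδ⟩ := h (ε / 2) (by positivity)
    refine ⟨fun _ x => ⟨if hx : x ∈ I.toSet then δ x / 2 else 1, ?_⟩, ?_, ?_⟩
    · dsimp only
      split_ifs with hx
      · have := hgauge x hx; exact Set.mem_Ioi.2 (by linarith)
      · exact Set.mem_Ioi.2 one_pos
    · intro c hc
      rw [henstock_bRiemann] at hc
      exact absurd hc (by simp)
    · intro c π hmem hpart
      have hH : π.IsHenstock := hmem.isHenstock rfl
      set D := TaggedDiv.ofBox I π hpart hH with hD
      have hcompat : Compat D δ := by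
        refine TaggedDiv.compat_ofBox π hpart hH hmem.isSubordinate fun x hx => ?_
        dsimp only
        rw [dif_pos hx]
        have := hgauge x hx
        linarith
      have := hδ D hcompat
      rw [TaggedDiv.riemannSum_ofBox] at this
      rw [Real.dist_eq]
      linarith [abs_nonneg (integralSum f BoxAdditiveMap.volume π - A)]
  · intro h ε hε
    rw [hasIntegral_iff] at h
    obtain ⟨r, -, hr⟩ := h (ε / 2) (by positivity)
    refine ⟨fun x => (r 1 x : ℝ), fun x _ => (r 1 x).2, fun D hcompat => ?_⟩
    have hmem : IntegrationParams.Henstock.MemBaseSet I.box 1 (r 1) D.toBox := by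
      refine ⟨D.toBox_isSubordinate hcompat (r 1) fun x _ => le_rfl,
        fun _ => D.toBox_isHenstock, fun hd => ?_, fun hd => ?_⟩ <;>
      · rw [henstock_bDistortion] at hd; exact absurd hd (by simp)
    have := hr 1 D.toBox hmem D.toBox_isPartition
    rw [TaggedDiv.integralSum_toBox, Real.dist_eq] at this
    linarith
end BridgeMain
section NullSets

open BoxIntegral MeasureTheory

variable {I : Brick ι}

lemma Brick.vol_nonneg (b : Brick ι) : 0 ≤ b.vol :=
  Finset.prod_nonneg fun j _ => by linarith [b.lt j]

lemma mustar_mono {X Y : Set (ι → ℝ)} (hXY : Y ⊆ X) : mustar I Y ≤ mustar I X := by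
  refine iInf_mono fun δ => iInf_mono fun _ => iSup_mono fun D => iSup_mono fun _ => ?_
  refine ENNReal.ofReal_le_ofReal (Finset.sum_le_sum fun p _ => ?_)
  dsimp only
  by_cases h : p.2 ∈ Y
  · rw [if_pos h, if_pos (hXY h)]
  · rw [if_neg h, abs_zero]
    exact abs_nonneg _

lemma exists_gauge_of_mustar_zero {X : Set (ι → ℝ)} (hX : mustar I X = 0)
    {ε : ℝ} (hε : 0 < ε) :
    ∃ δ : (ι → ℝ) → ℝ, IsGauge I δ ∧ ∀ D : TaggedDiv I, Compat D δ →
      (∑ p ∈ D.pieces.filter (fun p => p.2 ∈ X), p.1.vol) ≤ ε := by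
  have h0 : (mustar I X : ℝ≥0∞) < ENNReal.ofReal ε := by
    rw [hX]; exact ENNReal.ofReal_pos.2 hε
  rw [mustar, variationOn, variation] at h0
  rw [iInf_lt_iff] at h0
  obtain ⟨δ, hδ⟩ := h0
  rw [iInf_lt_iff] at hδ
  obtain ⟨hgauge, hδ⟩ := hδ
  refine ⟨δ, hgauge, fun D hD => ?_⟩
  have hle : ENNReal.ofReal (varSum (fun J P => if P ∈ X then J.vol else 0) D) <
      ENNReal.ofReal ε := by
    refine lt_of_le_of_lt ?_ hδ
    exact le_iSup₂ (f := fun (D : TaggedDiv I) (_ : D ∈ {D : TaggedDiv I | Compat D δ}) =>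
      ENNReal.ofReal (varSum (fun J P => if P ∈ X then J.vol else 0) D)) D hD
  rw [ENNReal.ofReal_lt_ofReal_iff hε] at hle
  refine le_of_lt (lt_of_le_of_lt ?_ hle)
  rw [varSum, Finset.sum_filter]
  refine Finset.sum_le_sum fun p _ => ?_
  by_cases h : p.2 ∈ X
  · rw [if_pos h]
    exact le_abs_self _
  · rw [if_neg h]
    simp

lemma sum_pow_half_le (S : Finset ℕ) : ∑ n ∈ S, (1/2 : ℝ) ^ (n + 1) ≤ 1 := by
  set M := S.sup id + 1 with hM
  have hsub : S ⊆ Finset.range M := fun n hn =>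
    Finset.mem_range.2 (Nat.lt_succ_of_le (Finset.le_sup (f := id) hn))
  calc ∑ n ∈ S, (1/2 : ℝ) ^ (n + 1)
      ≤ ∑ n ∈ Finset.range M, (1/2 : ℝ) ^ (n + 1) :=
        Finset.sum_le_sum_of_subset_of_nonneg hsub (fun n _ _ => by positivity)
    _ = (∑ n ∈ Finset.range M, (1/2 : ℝ) ^ n) * (1/2) := by
        rw [Finset.sum_mul]
        exact Finset.sum_congr rfl fun n _ => (pow_succ _ _)
    _ ≤ 2 * (1/2) := by
        have := sum_geometric_two_le M
        nlinarith
    _ = 1 := by norm_num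

theorem hasIntegral_zero_of_mustar_zero {X : Set (ι → ℝ)} (hX : mustar I X = 0)
    {h : (ι → ℝ) → ℝ} (hh : ∀ x ∈ I.toSet, x ∉ X → h x = 0) :
    HasIntegral I.box IntegrationParams.Henstock h BoxAdditiveMap.volume 0 := by
  rw [hasIntegral_iff]
  intro ε hε
  obtain ⟨Xn, hXnd⟩ : ∃ Xn : ℕ → Set (ι → ℝ),
      Xn = fun n => {x | x ∈ X ∧ x ∈ I.toSet ∧ ⌊|h x|⌋₊ = n} := ⟨_, rfl⟩
  have hmemXn : ∀ n x, x ∈ Xn n ↔ (x ∈ X ∧ x ∈ I.toSet ∧ ⌊|h x|⌋₊ = n) := fun n x => by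
    rw [hXnd]; exact Iff.rfl
  have hXn0 : ∀ n, mustar I (Xn n) = 0 := fun n =>
    le_antisymm (hX ▸ mustar_mono fun x hx => ((hmemXn n x).1 hx).1) (zero_le)
  set en : ℕ → ℝ := fun n => ε / (2 ^ (n + 1) * (n + 1)) with hen
  have hen0 : ∀ n, 0 < en n := fun n => by positivity
  choose δn hδngauge hδn using fun n => exists_gauge_of_mustar_zero (hXn0 n) (hen0 n)
  -- the gauge
  have hrpos : ∀ x : ι → ℝ, 0 <
      if hx : x ∈ X ∧ x ∈ I.toSet then δn ⌊|h x|⌋₊ x / 2 else 1 := by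
    intro x
    split_ifs with hx
    · have := hδngauge ⌊|h x|⌋₊ x hx.2; linarith
    · exact one_pos
  refine ⟨fun _ x => ⟨_, Set.mem_Ioi.2 (hrpos x)⟩, ?_, ?_⟩
  · intro c hc
    rw [henstock_bRiemann] at hc
    exact absurd hc (by simp)
  intro c π hmem hpart
  have hHen : π.IsHenstock := hmem.isHenstock rfl
  have htagset : ∀ J, π.tag J ∈ I.toSet := fun J => by
    rw [← Brick.Icc_box]; exact π.tag_mem_Icc J
  set πs : ℕ → TaggedPrepartition I.box :=
    fun n => π.filter (fun J => π.tag J ∈ Xn n) with hπs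
  -- key per-level estimate
  have key : ∀ n : ℕ,
      (∑ J ∈ (πs n).boxes, (volume : Measure (ι → ℝ)).toBoxAdditive J) ≤ en n := by
    intro n
    set ρ : (ι → ℝ) → Set.Ioi (0:ℝ) := fun x =>
      ⟨if hx : x ∈ I.toSet then δn n x / 2 else 1, by
        split_ifs with hx
        · have := hδngauge n x hx; exact Set.mem_Ioi.2 (by linarith)
        · exact Set.mem_Ioi.2 one_pos⟩ with hρ
    set PP := (πs n).unionComplToSubordinate (πs n).toPrepartition.compl
      (πs n).toPrepartition.iUnion_compl ρ with hPP
    have hPPpart : PP.IsPartition :=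
      TaggedPrepartition.isPartition_unionComplToSubordinate _ _ _ _
    have hPPhen : PP.IsHenstock := by
      refine TaggedPrepartition.IsHenstock.disjUnion ?_ ?_ _
      · exact fun J hJ => hHen J (Finset.mem_filter.1 hJ).1
      · exact Prepartition.isHenstock_toSubordinate _ _
    have hPPsub : PP.IsSubordinate ρ := by
      refine TaggedPrepartition.IsSubordinate.disjUnion ?_ ?_ _
      · have hsubf := (hmem.filter (fun J => π.tag J ∈ Xn n)).1
        refine hsubf.mono' ?_
        intro J hJ
        have htX := (hmemXn n _).1 (Finset.mem_filter.1 hJ).2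
        have h1 : π.tag J ∈ I.toSet := htagset J
        rw [← Subtype.coe_le_coe]
        show (if _ : π.tag J ∈ X ∧ π.tag J ∈ I.toSet
            then δn ⌊|h (π.tag J)|⌋₊ (π.tag J) / 2 else 1) ≤
          ((if _ : π.tag J ∈ I.toSet then δn n (π.tag J) / 2 else 1 : ℝ))
        rw [dif_pos ⟨htX.1, htX.2.1⟩, dif_pos h1, htX.2.2]
      · exact Prepartition.isSubordinate_toSubordinate _ _
    set D := TaggedDiv.ofBox I PP hPPpart hPPhen with hD
    have hcompat : Compat D (δn n) := by
      refine TaggedDiv.compat_ofBox PP hPPpart hPPhen hPPsub fun x hx => ?_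
      rw [hρ]
      dsimp only
      rw [dif_pos hx]
      have := hδngauge n x hx
      linarith
    have hvar := hδn n D hcompat
    -- the boxes of `πs n` give pieces of `D` with tags in `Xn n`
    have hBsub : (πs n).boxes.image (fun J => (J.brick, PP.tag J)) ⊆
        D.pieces.filter (fun p => p.2 ∈ Xn n) := by
      intro p hp
      rcases Finset.mem_image.1 hp with ⟨J, hJ, rfl⟩
      have hJPP : J ∈ PP.boxes := by
        rw [hPP]
        exact Finset.mem_union.2 (Or.inl hJ)
      have htag : PP.tag J = (πs n).tag J :=
        TaggedPrepartition.disjUnion_tag_of_mem_left _ hJ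
      refine Finset.mem_filter.2 ⟨?_, ?_⟩
      · rw [hD, TaggedDiv.pieces_ofBox]
        exact Finset.mem_image.2 ⟨J, hJPP, rfl⟩
      · rw [htag]; exact (Finset.mem_filter.1 hJ).2
    have hsum1 : (∑ J ∈ (πs n).boxes, (volume : Measure (ι → ℝ)).toBoxAdditive J) =
        ∑ p ∈ (πs n).boxes.image (fun J => (J.brick, PP.tag J)), p.1.vol := by
      rw [Finset.sum_image]
      · exact Finset.sum_congr rfl fun J _ => (Box.vol_brick J).symm
      · intro J _ K _ hJK
        exact Box.brick_inj (congrArg Prod.fst hJK)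
    have hsum2 : (∑ p ∈ (πs n).boxes.image (fun J => (J.brick, PP.tag J)), p.1.vol) ≤
        ∑ p ∈ D.pieces.filter (fun p => p.2 ∈ Xn n), p.1.vol :=
      Finset.sum_le_sum_of_subset_of_nonneg hBsub fun p _ _ => p.1.vol_nonneg
    exact le_trans (le_of_eq hsum1) (le_trans hsum2 hvar)
  -- main estimate
  have hvol_nonneg : ∀ J : Box ι, 0 ≤ (volume : Measure (ι → ℝ)).toBoxAdditive J :=
    fun J => by rw [Measure.toBoxAdditive_apply]; exact ENNReal.toReal_nonneg
  rw [dist_zero_right, Real.norm_eq_abs]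
  set g : Box ι → ℝ := fun J =>
    (volume : Measure (ι → ℝ)).toBoxAdditive J * |h (π.tag J)| with hg
  have habs : |integralSum h BoxAdditiveMap.volume π| ≤ ∑ J ∈ π.boxes, g J := by
    rw [integralSum]
    refine (Finset.abs_sum_le_sum_abs _ _).trans (Finset.sum_le_sum fun J _ => ?_)
    rw [BoxAdditiveMap.volume_apply, smul_eq_mul, abs_mul, ← Box.volume_apply,
      abs_of_nonneg (hvol_nonneg J)]
  set F := π.boxes.filter (fun J => π.tag J ∈ X) with hF
  have hsplit : ∑ J ∈ π.boxes, g J = ∑ J ∈ F, g J := by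
    rw [hF, ← Finset.sum_filter_add_sum_filter_not π.boxes (fun J => π.tag J ∈ X) g]
    have : ∑ J ∈ π.boxes.filter (fun J => ¬ π.tag J ∈ X), g J = 0 := by
      refine Finset.sum_eq_zero fun J hJ => ?_
      have := hh (π.tag J) (htagset J) (Finset.mem_filter.1 hJ).2
      rw [hg]; dsimp only; rw [this, abs_zero, mul_zero]
    rw [this, add_zero]
  set κ : Box ι → ℕ := fun J => ⌊|h (π.tag J)|⌋₊ with hκ
  have hfiber : ∑ J ∈ F, g J =
      ∑ n ∈ F.image κ, ∑ J ∈ F.filter (fun J => κ J = n), g J :=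
    (Finset.sum_fiberwise_of_maps_to (fun J hJ => Finset.mem_image_of_mem κ hJ) g).symm
  have hFn : ∀ n, F.filter (fun J => κ J = n) = (πs n).boxes := by
    intro n
    ext J
    rw [Finset.mem_filter, Finset.mem_filter]
    show _ ↔ J ∈ π.boxes.filter _
    rw [Finset.mem_filter]
    constructor
    · rintro ⟨⟨h1, h2⟩, h3⟩
      exact ⟨h1, (hmemXn n _).2 ⟨h2, htagset J, h3⟩⟩
    · rintro ⟨h1, h2⟩
      rcases (hmemXn n _).1 h2 with ⟨h3, _, h4⟩
      exact ⟨⟨h1, h3⟩, h4⟩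
  have hper : ∀ n, ∑ J ∈ F.filter (fun J => κ J = n), g J ≤ ε * (1/2)^(n+1) := by
    intro n
    rw [hFn n]
    have h1 : ∑ J ∈ (πs n).boxes, g J ≤
        (n + 1) * ∑ J ∈ (πs n).boxes,
          (volume : Measure (ι → ℝ)).toBoxAdditive J := by
      rw [Finset.mul_sum]
      refine Finset.sum_le_sum fun J hJ => ?_
      have hmemX := (hmemXn n _).1 (Finset.mem_filter.1 hJ).2
      have hlt : |h (π.tag J)| < n + 1 := by
        have := Nat.lt_succ_floor |h (π.tag J)|
        rw [hmemX.2.2] at this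
        exact_mod_cast this
      rw [hg]
      dsimp only
      rw [mul_comm ((n : ℝ) + 1)]
      exact mul_le_mul_of_nonneg_left hlt.le (hvol_nonneg J)
    refine h1.trans ?_
    have h2 := key n
    have h3 : ((n : ℝ) + 1) * en n = ε * (1/2)^(n+1) := by
      rw [hen, one_div, inv_pow]
      have h4 : ((2:ℝ) ^ (n+1)) ≠ 0 := by positivity
      have h5 : ((n : ℝ) + 1) ≠ 0 := by positivity
      field_simp
    calc ((n:ℝ) + 1) * ∑ J ∈ (πs n).boxes,
          (volume : Measure (ι → ℝ)).toBoxAdditive J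
        ≤ ((n:ℝ) + 1) * en n := by
          refine mul_le_mul_of_nonneg_left h2 (by positivity)
      _ = ε * (1/2)^(n+1) := h3
  calc |integralSum h BoxAdditiveMap.volume π|
      ≤ ∑ J ∈ π.boxes, g J := habs
    _ = ∑ n ∈ F.image κ, ∑ J ∈ F.filter (fun J => κ J = n), g J := by
        rw [hsplit, hfiber]
    _ ≤ ∑ n ∈ F.image κ, ε * (1/2)^(n+1) := Finset.sum_le_sum fun n _ => hper n
    _ = ε * ∑ n ∈ F.image κ, (1/2)^(n+1) := by rw [Finset.mul_sum]
    _ ≤ ε * 1 := mul_le_mul_of_nonneg_left (sum_pow_half_le _) hε.le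
    _ = ε := mul_one ε

end NullSets
section Lattice

open BoxIntegral MeasureTheory IntegrationParams

variable {J₀ : Box ι}

/-- A gauge forcing subordination to a fixed prepartition. -/
noncomputable def sepFn (π₀ : BoxIntegral.Prepartition J₀) (x : ι → ℝ) : ℝ :=
  if h : (π₀.boxes.filter (fun J => x ∉ Box.Icc J)).Nonempty then
    (π₀.boxes.filter (fun J => x ∉ Box.Icc J)).inf' h
      (fun J => Metric.infDist x (Box.Icc J))
  else 1

lemma sepFn_pos (π₀ : BoxIntegral.Prepartition J₀) (x : ι → ℝ) : 0 < sepFn π₀ x := by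
  rw [sepFn]
  split_ifs with h
  · refine (Finset.lt_inf'_iff _).2 fun J hJ => ?_
    have hx : x ∉ Box.Icc J := (Finset.mem_filter.1 hJ).2
    exact (J.isCompact_Icc.isClosed.notMem_iff_infDist_pos ⟨J.lower, J.lower_mem_Icc⟩).1 hx
  · exact one_pos

lemma sepFn_le (π₀ : BoxIntegral.Prepartition J₀) {x : ι → ℝ} {J : Box ι}
    (hJ : J ∈ π₀) (hx : x ∉ Box.Icc J) : sepFn π₀ x ≤ Metric.infDist x (Box.Icc J) := by
  have hmem : J ∈ π₀.boxes.filter (fun J => x ∉ Box.Icc J) :=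
    Finset.mem_filter.2 ⟨hJ, hx⟩
  rw [sepFn, dif_pos ⟨J, hmem⟩]
  exact Finset.inf'_le _ hmem

/-- If a set within distance `< sepFn π₀ t` of `t` meets `Box.Icc J` for `J ∈ π₀`,
then `t ∈ Box.Icc J`. -/
lemma mem_Icc_of_sep {π₀ : BoxIntegral.Prepartition J₀} {t y : ι → ℝ} {J : Box ι}
    (hJ : J ∈ π₀) (hy : y ∈ Box.Icc J) (hd : dist t y < sepFn π₀ t) : t ∈ Box.Icc J := by
  by_contra ht
  have h1 := sepFn_le π₀ hJ ht
  have h2 := Metric.infDist_le_dist_of_mem (x := t) hy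
  linarith

/-- Absolute-value version of the Henstock–Sacks inequality. -/
lemma abs_sum_HS {f : (ι → ℝ) → ℝ}
    (hf : Integrable J₀ Henstock f BoxAdditiveMap.volume) {ε : ℝ} (hε : 0 < ε) {c : NNReal}
    {σ : TaggedPrepartition J₀} (hσ : Henstock.MemBaseSet J₀ c (hf.convergenceR ε c) σ) :
    ∑ J ∈ σ.boxes, |BoxAdditiveMap.volume J (f (σ.tag J)) -
      integral J Henstock f BoxAdditiveMap.volume| ≤ 2 * ε := by
  classical
  set q : Box ι → ℝ := fun J => BoxAdditiveMap.volume J (f (σ.tag J)) -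
      integral J Henstock f BoxAdditiveMap.volume with hq
  set p : Box ι → Prop := fun J => 0 ≤ q J with hp
  have hb1 : (σ.filter p).boxes = σ.boxes.filter p := Finset.filter_congr_decidable _ _ _
  have hb2 : (σ.filter (fun J => ¬ p J)).boxes = σ.boxes.filter (fun J => ¬ p J) :=
    Finset.filter_congr_decidable _ _ _
  have hpos : |∑ J ∈ (σ.filter p).boxes, q J| ≤ ε := by
    have := hf.dist_integralSum_sum_integral_le_of_memBaseSet hε (hσ.filter p)
    rw [Real.dist_eq, integralSum, ← Finset.sum_sub_distrib] at this
    exact this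
  have hneg : |∑ J ∈ (σ.filter (fun J => ¬ p J)).boxes, q J| ≤ ε := by
    have := hf.dist_integralSum_sum_integral_le_of_memBaseSet hε (hσ.filter (fun J => ¬ p J))
    rw [Real.dist_eq, integralSum, ← Finset.sum_sub_distrib] at this
    exact this
  have e1 : ∑ J ∈ (σ.filter p).boxes, |q J| = |∑ J ∈ (σ.filter p).boxes, q J| := by
    have h0 : ∀ J ∈ (σ.filter p).boxes, 0 ≤ q J := fun J hJ => by
      rw [hb1] at hJ; exact (Finset.mem_filter.1 hJ).2
    rw [abs_of_nonneg (Finset.sum_nonneg h0)]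
    exact Finset.sum_congr rfl fun J hJ => abs_of_nonneg (h0 J hJ)
  have e2 : ∑ J ∈ (σ.filter (fun J => ¬ p J)).boxes, |q J| =
      |∑ J ∈ (σ.filter (fun J => ¬ p J)).boxes, q J| := by
    have h0 : ∀ J ∈ (σ.filter (fun J => ¬ p J)).boxes, q J ≤ 0 := fun J hJ => by
      rw [hb2] at hJ; exact le_of_lt (lt_of_not_ge (Finset.mem_filter.1 hJ).2)
    rw [abs_of_nonpos (Finset.sum_nonpos h0), ← Finset.sum_neg_distrib]
    exact Finset.sum_congr rfl fun J hJ => abs_of_nonpos (h0 J hJ)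
  calc ∑ J ∈ σ.boxes, |q J|
      = ∑ J ∈ σ.boxes.filter p, |q J| + ∑ J ∈ σ.boxes.filter (fun J => ¬ p J), |q J| :=
        (Finset.sum_filter_add_sum_filter_not _ _ _).symm
    _ = ∑ J ∈ (σ.filter p).boxes, |q J| +
        ∑ J ∈ (σ.filter (fun J => ¬ p J)).boxes, |q J| := by rw [hb1, hb2]
    _ ≤ ε + ε := by
        rw [e1, e2]
        exact add_le_add hpos hneg
    _ = 2 * ε := by ring

end Lattice
section AbsIntegrable

open BoxIntegral MeasureTheory IntegrationParams

variable {J₀ : Box ι}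

lemma coe_inf_box {P J K : Box ι} (h : (P : WithBot (Box ι)) = ↑J ⊓ ↑K) :
    (P : Set (ι → ℝ)) = ↑J ∩ ↑K := by
  have := congrArg (fun o : WithBot (Box ι) => (o : Set (ι → ℝ))) h
  simpa only [Box.coe_inf, Box.coe_coe] using this

lemma Icc_inf_box {P J K : Box ι} (h : (P : WithBot (Box ι)) = ↑J ⊓ ↑K) :
    Box.Icc P = Box.Icc J ∩ Box.Icc K := by
  have h' : Box.mk' (J.lower ⊔ K.lower) (J.upper ⊓ K.upper) = ((P : WithBot (Box ι))) := by
    rw [h]; rfl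
  rw [Box.mk'_eq_coe] at h'
  rw [Box.Icc_def, Box.Icc_def, Box.Icc_def, ← h'.1, ← h'.2, Set.Icc_inter_Icc]

theorem hasIntegral_abs {f G : (ι → ℝ) → ℝ}
    (hf : Integrable J₀ Henstock f BoxAdditiveMap.volume)
    (hG : Integrable J₀ Henstock G BoxAdditiveMap.volume)
    (hle : ∀ x ∈ Box.Icc J₀, |f x| ≤ G x) :
    Integrable J₀ Henstock (fun x => |f x|) BoxAdditiveMap.volume := by
  classical
  set F : Box ι → ℝ := fun J => integral J Henstock f BoxAdditiveMap.volume with hFdef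
  set VS : Set ℝ :=
    {v | ∃ π₀ : Prepartition J₀, π₀.IsPartition ∧ v = ∑ J ∈ π₀.boxes, |F J|} with hVS
  have hVne : VS.Nonempty := ⟨_, ⊤, Prepartition.isPartitionTop J₀, rfl⟩
  have hVbd : ∀ v ∈ VS, v ≤ integral J₀ Henstock G BoxAdditiveMap.volume := by
    rintro v ⟨π₀, hπ₀, rfl⟩
    calc ∑ J ∈ π₀.boxes, |F J|
        ≤ ∑ J ∈ π₀.boxes, integral J Henstock G BoxAdditiveMap.volume := by
          refine Finset.sum_le_sum fun J hJ => ?_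
          have h1 : ∀ x ∈ Box.Icc J, ‖f x‖ ≤ G x := fun x hx =>
            hle x (Box.le_iff_Icc.1 (π₀.le_of_mem hJ) hx)
          have := norm_integral_le_of_norm_le h1 volume (hG.to_subbox (π₀.le_of_mem hJ))
          rwa [Real.norm_eq_abs] at this
      _ = integral J₀ Henstock G BoxAdditiveMap.volume := by
          have h2 := (hG.toBoxAdditive).sum_partition_boxes le_rfl hπ₀
          simp only [Integrable.toBoxAdditive_apply] at h2
          exact h2
  have hbdd : BddAbove VS := ⟨_, hVbd⟩
  set V := sSup VS with hVdef
  refine ⟨V, ?_⟩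
  rw [hasIntegral_iff]
  intro ε' hε'
  set ε := ε' / 3 with hεdef
  have hε : 0 < ε := by positivity
  obtain ⟨v, hvVS, hvlt⟩ := exists_lt_of_lt_csSup hVne (show V - ε < V by linarith)
  obtain ⟨π₀, hπ₀part, rfl⟩ := hvVS
  refine ⟨fun c x => ⟨min ((hf.convergenceR ε c x : ℝ)) (sepFn π₀ x / 2), ?_⟩, ?_, ?_⟩
  · have h1 := (hf.convergenceR ε c x).2
    have h2 := sepFn_pos π₀ x
    rw [Set.mem_Ioi] at h1 ⊢
    exact lt_min h1 (by linarith)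
  · intro c hc
    rw [henstock_bRiemann] at hc
    exact absurd hc (by simp)
  intro c π hmem hpart
  have hHen : π.IsHenstock := hmem.isHenstock rfl
  have hsub : π.IsSubordinate (hf.convergenceR ε c) := by
    refine hmem.isSubordinate.mono fun x _ => ?_
    rw [← Subtype.coe_le_coe]
    exact min_le_left _ _
  set π' := π.infPrepartition π₀ with hπ'
  have hπ'part : π'.IsPartition := hpart.infPrepartition hπ₀part
  -- Henstock property of the refinement
  have hπ'hen : π'.IsHenstock := by
    intro P hP
    have hP' : P ∈ π.toPrepartition.biUnion (fun J => π₀.restrict J) := hP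
    set J := π.toPrepartition.biUnionIndex (fun J => π₀.restrict J) P with hJdef
    have hJπ : J ∈ π.toPrepartition := π.toPrepartition.biUnionIndex_mem hP'
    have hPJ : P ∈ π₀.restrict J := π.toPrepartition.mem_biUnionIndex hP'
    obtain ⟨J₁, hJ₁, hPeq⟩ := (Prepartition.mem_restrict _).1 hPJ
    have htag : π'.tag P = π.tag J := rfl
    have ht1 : π.tag J ∈ Box.Icc J := hHen J hJπ
    -- pick a point of P
    obtain ⟨y, hy⟩ := P.nonempty_coe
    have hyJK : y ∈ (J : Set (ι → ℝ)) ∩ (J₁ : Set (ι → ℝ)) := by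
      rw [← coe_inf_box hPeq]; exact hy
    have hdist : dist (π.tag J) y < sepFn π₀ (π.tag J) := by
      have h2 : y ∈ Metric.closedBall (π.tag J)
          (min ((hf.convergenceR ε c (π.tag J) : ℝ)) (sepFn π₀ (π.tag J) / 2)) :=
        hmem.isSubordinate J hJπ (Box.coe_subset_Icc hyJK.1)
      rw [Metric.mem_closedBall] at h2
      have h3 := min_le_right ((hf.convergenceR ε c (π.tag J) : ℝ)) (sepFn π₀ (π.tag J) / 2)
      have h4 := sepFn_pos π₀ (π.tag J)
      rw [dist_comm]
      calc dist y (π.tag J) ≤ _ := h2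
        _ < sepFn π₀ (π.tag J) := by linarith
    have ht2 : π.tag J ∈ Box.Icc J₁ :=
      mem_Icc_of_sep hJ₁ (Box.coe_subset_Icc hyJK.2) hdist
    rw [htag, Icc_inf_box hPeq]
    exact ⟨ht1, ht2⟩
  have hπ'sub : π'.IsSubordinate (hf.convergenceR ε c) := hsub.infPrepartition π₀
  have hπ'mem : Henstock.MemBaseSet J₀ c (hf.convergenceR ε c) π' := by
    refine ⟨hπ'sub, fun _ => hπ'hen, fun hd => ?_, fun hd => ?_⟩ <;>
    · rw [henstock_bDistortion] at hd; exact absurd hd (by simp)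
  have habs := abs_sum_HS hf hε hπ'mem
  -- estimates
  have hT : integralSum (fun x => |f x|) BoxAdditiveMap.volume π =
      ∑ P ∈ π'.boxes, BoxAdditiveMap.volume P |f (π'.tag P)| := by
    rw [← integralSum_inf_partition (fun x => |f x|) BoxAdditiveMap.volume π hπ₀part]
    rfl
  have h2 : abs ((∑ P ∈ π'.boxes, BoxAdditiveMap.volume P |f (π'.tag P)|) -
      ∑ P ∈ π'.boxes, |F P|) ≤ 2 * ε := by
    rw [← Finset.sum_sub_distrib]
    refine (Finset.abs_sum_le_sum_abs _ _).trans
      (le_trans (Finset.sum_le_sum fun P hP => ?_) habs)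
    have hprod : 0 ≤ ∏ j, (P.upper j - P.lower j) :=
      Finset.prod_nonneg fun j _ => sub_nonneg.2 (P.lower_le_upper j)
    have hv : BoxAdditiveMap.volume P |f (π'.tag P)| =
        |BoxAdditiveMap.volume P (f (π'.tag P))| := by
      rw [BoxAdditiveMap.volume_apply, BoxAdditiveMap.volume_apply, smul_eq_mul,
        smul_eq_mul, abs_mul, abs_of_nonneg hprod]
    rw [hv]
    exact abs_abs_sub_abs_le_abs_sub _ _
  have h3 : ∑ P ∈ π'.boxes, |F P| ≤ V :=
    le_csSup hbdd ⟨π'.toPrepartition, hπ'part, rfl⟩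
  have h4 : V - ε ≤ ∑ P ∈ π'.boxes, |F P| := by
    have hgroup : ∑ P ∈ π'.boxes, |F P| =
        ∑ J₁ ∈ π₀.boxes, ∑ P ∈ (π.toPrepartition.restrict J₁).boxes, |F P| := by
      have heq : π'.toPrepartition = π₀.biUnion (fun J₁ => π.toPrepartition.restrict J₁) := by
        rw [hπ', TaggedPrepartition.infPrepartition_toPrepartition, inf_comm,
          Prepartition.inf_def]
      calc ∑ P ∈ π'.boxes, |F P|
          = ∑ P ∈ (π₀.biUnion fun J₁ => π.toPrepartition.restrict J₁).boxes, |F P| := by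
            rw [show π'.boxes = π'.toPrepartition.boxes from rfl, heq]
        _ = ∑ J₁ ∈ π₀.boxes, ∑ P ∈ (π.toPrepartition.restrict J₁).boxes, |F P| :=
            Prepartition.sum_biUnion_boxes _ _ _
    have hper : ∀ J₁ ∈ π₀.boxes, |F J₁| ≤
        ∑ P ∈ (π.toPrepartition.restrict J₁).boxes, |F P| := by
      intro J₁ hJ₁
      have h5 := (hf.toBoxAdditive).sum_partition_boxes
        (WithTop.coe_le_coe.2 (π₀.le_of_mem hJ₁))
        (Prepartition.IsPartition.restrict hpart (π₀.le_of_mem hJ₁))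
      simp only [Integrable.toBoxAdditive_apply] at h5
      calc |F J₁| = |∑ P ∈ (π.toPrepartition.restrict J₁).boxes, F P| := by rw [h5]
        _ ≤ ∑ P ∈ (π.toPrepartition.restrict J₁).boxes, |F P| :=
            Finset.abs_sum_le_sum_abs _ _
    calc V - ε ≤ ∑ J₁ ∈ π₀.boxes, |F J₁| := hvlt.le
      _ ≤ ∑ J₁ ∈ π₀.boxes, ∑ P ∈ (π.toPrepartition.restrict J₁).boxes, |F P| :=
          Finset.sum_le_sum hper
      _ = ∑ P ∈ π'.boxes, |F P| := hgroup.symm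
  rw [Real.dist_eq, hT]
  rw [abs_le] at h2 ⊢
  constructor <;> linarith

end AbsIntegrable
section MinMax

open BoxIntegral MeasureTheory IntegrationParams

variable {J₀ : Box ι}

lemma vol_eq_BV : (volume : Measure (ι → ℝ)).toBoxAdditive.toSMul =
    (BoxAdditiveMap.volume : ι →ᵇᵃ ℝ →L[ℝ] ℝ) := rfl

lemma integral_mono' {f g : (ι → ℝ) → ℝ}
    (hf : Integrable J₀ Henstock f BoxAdditiveMap.volume)
    (hg : Integrable J₀ Henstock g BoxAdditiveMap.volume)
    (hle : ∀ x ∈ Box.Icc J₀, f x ≤ g x) :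
    integral J₀ Henstock f BoxAdditiveMap.volume ≤
      integral J₀ Henstock g BoxAdditiveMap.volume := by
  have h1 : (0:ℝ) ≤ integral J₀ Henstock (g - f) BoxAdditiveMap.volume := by
    rw [← vol_eq_BV]
    exact integral_nonneg (fun x hx => sub_nonneg.2 (hle x hx)) volume
  have h2 := integral_sub hg hf
  rw [h2] at h1
  linarith

lemma integrable_abs_sub {f g G : (ι → ℝ) → ℝ}
    (hf : Integrable J₀ Henstock f BoxAdditiveMap.volume)
    (hg : Integrable J₀ Henstock g BoxAdditiveMap.volume)
    (hG : Integrable J₀ Henstock G BoxAdditiveMap.volume)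
    (hle : ∀ x ∈ Box.Icc J₀, |f x - g x| ≤ G x) :
    Integrable J₀ Henstock (fun x => |f x - g x|) BoxAdditiveMap.volume := by
  have h1 : Integrable J₀ Henstock (fun x => |(f - g) x|) BoxAdditiveMap.volume :=
    hasIntegral_abs (hf.sub hg) hG (fun x hx => hle x hx)
  exact h1

lemma integrable_min {f g G : (ι → ℝ) → ℝ}
    (hf : Integrable J₀ Henstock f BoxAdditiveMap.volume)
    (hg : Integrable J₀ Henstock g BoxAdditiveMap.volume)
    (hG : Integrable J₀ Henstock G BoxAdditiveMap.volume)
    (hle : ∀ x ∈ Box.Icc J₀, |f x - g x| ≤ G x) :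
    Integrable J₀ Henstock (fun x => min (f x) (g x)) BoxAdditiveMap.volume := by
  have h1 := integrable_abs_sub hf hg hG hle
  have h2 : Integrable J₀ Henstock
      ((2⁻¹ : ℝ) • (f + g - fun x => |f x - g x|)) BoxAdditiveMap.volume :=
    ((hf.add hg).sub h1).smul 2⁻¹
  have h3 : (fun x => min (f x) (g x)) =
      (2⁻¹ : ℝ) • (f + g - fun x => |f x - g x|) := by
    funext x
    show min (f x) (g x) = 2⁻¹ * (f x + g x - |f x - g x|)
    rcases le_total (f x) (g x) with h | h
    · rw [min_eq_left h, abs_of_nonpos (by linarith)]; ring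
    · rw [min_eq_right h, abs_of_nonneg (by linarith)]; ring
  rw [h3]
  exact h2

lemma integrable_max {f g G : (ι → ℝ) → ℝ}
    (hf : Integrable J₀ Henstock f BoxAdditiveMap.volume)
    (hg : Integrable J₀ Henstock g BoxAdditiveMap.volume)
    (hG : Integrable J₀ Henstock G BoxAdditiveMap.volume)
    (hle : ∀ x ∈ Box.Icc J₀, |f x - g x| ≤ G x) :
    Integrable J₀ Henstock (fun x => max (f x) (g x)) BoxAdditiveMap.volume := by
  have h1 := integrable_abs_sub hf hg hG hle
  have h2 : Integrable J₀ Henstock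
      ((2⁻¹ : ℝ) • ((f + g) + fun x => |f x - g x|)) BoxAdditiveMap.volume :=
    ((hf.add hg).add h1).smul 2⁻¹
  have h3 : (fun x => max (f x) (g x)) =
      (2⁻¹ : ℝ) • ((f + g) + fun x => |f x - g x|) := by
    funext x
    show max (f x) (g x) = 2⁻¹ * (f x + g x + |f x - g x|)
    rcases le_total (f x) (g x) with h | h
    · rw [max_eq_right h, abs_of_nonpos (by linarith)]; ring
    · rw [max_eq_left h, abs_of_nonneg (by linarith)]; ring
  rw [h3]
  exact h2

end MinMax
section MCT

open BoxIntegral MeasureTheory IntegrationParams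

variable {J₀ : Box ι}

theorem mct_mono {φ : ℕ → (ι → ℝ) → ℝ} {Φ : (ι → ℝ) → ℝ}
    (hint : ∀ n, Integrable J₀ Henstock (φ n) BoxAdditiveMap.volume)
    (hmono : ∀ x ∈ Box.Icc J₀, Monotone fun n => φ n x)
    (hconv : ∀ x ∈ Box.Icc J₀, Filter.Tendsto (fun n => φ n x) Filter.atTop
      (nhds (Φ x)))
    (hbdd : BddAbove (Set.range fun n =>
      integral J₀ Henstock (φ n) BoxAdditiveMap.volume)) :
    HasIntegral J₀ Henstock Φ BoxAdditiveMap.volume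
      (⨆ n, integral J₀ Henstock (φ n) BoxAdditiveMap.volume) := by
  classical
  set A : ℕ → ℝ := fun n => integral J₀ Henstock (φ n) BoxAdditiveMap.volume with hA
  have hAmono : Monotone A := fun m n hmn =>
    integral_mono' (hint m) (hint n) (fun x hx => hmono x hx hmn)
  set L := ⨆ n, A n with hL
  have hALle : ∀ n, A n ≤ L := fun n => le_ciSup hbdd n
  have hφΦ : ∀ x ∈ Box.Icc J₀, ∀ n, φ n x ≤ Φ x := fun x hx n =>
    Monotone.ge_of_tendsto (hmono x hx) (hconv x hx) n
  rw [hasIntegral_iff]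
  intro ε' hε'
  set μI := (volume : Measure (ι → ℝ)).toBoxAdditive J₀ with hμI
  have hμI0 : 0 ≤ μI := by
    rw [hμI, Measure.toBoxAdditive_apply]; exact ENNReal.toReal_nonneg
  set ε := ε' / (μI + 3) with hεdef
  have hε : 0 < ε := by positivity
  obtain ⟨N, hN⟩ := exists_lt_of_lt_ciSup (show L - ε < ⨆ n, A n by rw [← hL]; linarith)
  -- choose an index for each point
  have hkx : ∀ x, ∃ m, N ≤ m ∧ (x ∈ Box.Icc J₀ → Φ x - φ m x < ε) := by
    intro x
    by_cases hx : x ∈ Box.Icc J₀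
    · obtain ⟨M, hM⟩ := (Metric.tendsto_atTop.1 (hconv x hx)) ε hε
      refine ⟨max M N, le_max_right _ _, fun _ => ?_⟩
      have := hM (max M N) (le_max_left _ _)
      rw [Real.dist_eq, abs_lt] at this
      linarith [this.1]
    · exact ⟨N, le_rfl, fun hx' => absurd hx' hx⟩
  choose k hkN hkΦ using hkx
  set en : ℕ → ℝ := fun j => ε * (1/2)^(j+1) with hen
  have hen0 : ∀ j, 0 < en j := fun j => by positivity
  refine ⟨fun c x => (hint (k x)).convergenceR (en (k x)) c x, ?_, ?_⟩
  · intro c hc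
    rw [henstock_bRiemann] at hc
    exact absurd hc (by simp)
  intro c π hmem hpart
  have hHen : π.IsHenstock := hmem.isHenstock rfl
  have htagIcc : ∀ J, π.tag J ∈ Box.Icc J₀ := π.tag_mem_Icc
  set μ : Box ι → ℝ := fun J => (volume : Measure (ι → ℝ)).toBoxAdditive J with hμ
  have hμ0 : ∀ J, 0 ≤ μ J := fun J => by
    show 0 ≤ (volume : Measure (ι → ℝ)).toBoxAdditive J
    rw [Measure.toBoxAdditive_apply]; exact ENNReal.toReal_nonneg
  have hμsum : ∑ J ∈ π.boxes, μ J = μI :=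
    (volume : Measure (ι → ℝ)).toBoxAdditive.sum_partition_boxes le_top hpart
  have hvolap : ∀ (J : Box ι) (y : ℝ), BoxAdditiveMap.volume J y = μ J * y := by
    intro J y
    show _ = (volume : Measure (ι → ℝ)).toBoxAdditive J * y
    rw [BoxAdditiveMap.volume_apply, smul_eq_mul, Box.volume_apply]
  set κ : Box ι → ℕ := fun J => k (π.tag J) with hκ
  set B := ∑ J ∈ π.boxes, μ J * φ (κ J) (π.tag J) with hB
  set C := ∑ J ∈ π.boxes, integral J Henstock (φ (κ J)) BoxAdditiveMap.volume with hC
  -- first bound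
  have h1 : |integralSum Φ BoxAdditiveMap.volume π - B| ≤ ε * μI := by
    rw [integralSum, hB, ← Finset.sum_sub_distrib]
    refine (Finset.abs_sum_le_sum_abs _ _).trans ?_
    have : ∀ J ∈ π.boxes, |BoxAdditiveMap.volume J (Φ (π.tag J)) -
        μ J * φ (κ J) (π.tag J)| ≤ ε * μ J := by
      intro J _
      rw [hvolap, ← mul_sub, abs_mul, abs_of_nonneg (hμ0 J), mul_comm ε (μ J)]
      refine mul_le_mul_of_nonneg_left ?_ (hμ0 J)
      have hub := hkΦ (π.tag J) (htagIcc J)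
      have hlb := hφΦ (π.tag J) (htagIcc J) (κ J)
      rw [abs_of_nonneg (by linarith)]
      linarith
    refine (Finset.sum_le_sum this).trans ?_
    rw [← Finset.mul_sum, hμsum]
  -- second bound, via grouping and Henstock–Sacks
  have h2 : |B - C| ≤ 2 * ε := by
    have hgroup : B - C = ∑ j ∈ π.boxes.image κ, ∑ J ∈ π.boxes.filter (fun J => κ J = j),
        (μ J * φ (κ J) (π.tag J) - integral J Henstock (φ (κ J)) BoxAdditiveMap.volume) := by
      rw [hB, hC, ← Finset.sum_sub_distrib,
        Finset.sum_fiberwise_of_maps_to (fun J hJ => Finset.mem_image_of_mem κ hJ)]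
    have hfib : ∀ j ∈ π.boxes.image κ,
        |∑ J ∈ π.boxes.filter (fun J => κ J = j),
          (μ J * φ (κ J) (π.tag J) - integral J Henstock (φ (κ J)) BoxAdditiveMap.volume)|
        ≤ 2 * en j := by
      intro j _
      set σ := π.filter (fun J => κ J = j) with hσ
      have hbx : σ.boxes = π.boxes.filter (fun J => κ J = j) :=
        Finset.filter_congr_decidable _ _ _
      have hσmem : Henstock.MemBaseSet J₀ c ((hint j).convergenceR (en j) c) σ := by
        refine (hmem.filter _).mono' J₀ le_rfl le_rfl ?_
        intro J hJ
        have hJb : J ∈ π.boxes.filter (fun J => κ J = j) := by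
          rw [← hbx]; exact hJ
        have hk : κ J = j := (Finset.mem_filter.1 hJb).2
        have : (σ.tag J) = π.tag J := rfl
        rw [this]
        show ((hint (k (π.tag J))).convergenceR (en (k (π.tag J))) c (π.tag J)) ≤ _
        rw [show k (π.tag J) = j from hk]
      have hHS := abs_sum_HS (hint j) (hen0 j) hσmem
      calc |∑ J ∈ π.boxes.filter (fun J => κ J = j),
            (μ J * φ (κ J) (π.tag J) - integral J Henstock (φ (κ J)) BoxAdditiveMap.volume)|
          ≤ ∑ J ∈ π.boxes.filter (fun J => κ J = j),
            |μ J * φ (κ J) (π.tag J) - integral J Henstock (φ (κ J)) BoxAdditiveMap.volume| :=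
            Finset.abs_sum_le_sum_abs _ _
        _ = ∑ J ∈ σ.boxes, |BoxAdditiveMap.volume J (φ j (σ.tag J)) -
              integral J Henstock (φ j) BoxAdditiveMap.volume| := by
            rw [hbx]
            refine Finset.sum_congr rfl fun J hJ => ?_
            have hk : κ J = j := (Finset.mem_filter.1 hJ).2
            rw [hvolap, hk]
            rfl
        _ ≤ 2 * en j := hHS
    calc |B - C| ≤ ∑ j ∈ π.boxes.image κ, |∑ J ∈ π.boxes.filter (fun J => κ J = j),
          (μ J * φ (κ J) (π.tag J) - integral J Henstock (φ (κ J)) BoxAdditiveMap.volume)| := by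
          rw [hgroup]; exact Finset.abs_sum_le_sum_abs _ _
      _ ≤ ∑ j ∈ π.boxes.image κ, 2 * en j := Finset.sum_le_sum hfib
      _ = 2 * ε * ∑ j ∈ π.boxes.image κ, (1/2)^(j+1) := by
          rw [Finset.mul_sum]
          refine Finset.sum_congr rfl fun j _ => ?_
          rw [hen]; ring
      _ ≤ 2 * ε * 1 := by
          refine mul_le_mul_of_nonneg_left (sum_pow_half_le _) (by positivity)
      _ = 2 * ε := mul_one _
  -- third bound
  have h3 : L - ε ≤ C ∧ C ≤ L := by
    set M := π.boxes.sup κ with hM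
    have hCl : A N ≤ C := by
      have hAN : A N = ∑ J ∈ π.boxes, integral J Henstock (φ N) BoxAdditiveMap.volume := by
        have h5 := (hint N).toBoxAdditive.sum_partition_boxes le_rfl hpart
        simp only [Integrable.toBoxAdditive_apply] at h5
        rw [hA]; exact h5.symm
      rw [hAN, hC]
      refine Finset.sum_le_sum fun J hJ => ?_
      refine integral_mono' ((hint N).to_subbox (π.le_of_mem hJ))
        ((hint (κ J)).to_subbox (π.le_of_mem hJ)) ?_
      intro x hx
      have hxI : x ∈ Box.Icc J₀ := Box.le_iff_Icc.1 (π.le_of_mem hJ) hx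
      exact hmono x hxI (hkN (π.tag J))
    have hCu : C ≤ A M := by
      have hAM : A M = ∑ J ∈ π.boxes, integral J Henstock (φ M) BoxAdditiveMap.volume := by
        have h5 := (hint M).toBoxAdditive.sum_partition_boxes le_rfl hpart
        simp only [Integrable.toBoxAdditive_apply] at h5
        rw [hA]; exact h5.symm
      rw [hAM, hC]
      refine Finset.sum_le_sum fun J hJ => ?_
      refine integral_mono' ((hint (κ J)).to_subbox (π.le_of_mem hJ))
        ((hint M).to_subbox (π.le_of_mem hJ)) ?_
      intro x hx
      have hxI : x ∈ Box.Icc J₀ := Box.le_iff_Icc.1 (π.le_of_mem hJ) hx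
      exact hmono x hxI (Finset.le_sup (f := κ) hJ)
    exact ⟨le_trans (by linarith [hN]) hCl, le_trans hCu (hALle M)⟩
  rw [Real.dist_eq]
  rw [abs_le] at h1 h2 ⊢
  have hmul : ε * (μI + 3) = ε' := by
    rw [hεdef]
    field_simp
  constructor <;> nlinarith [h1.1, h1.2, h2.1, h2.2, h3.1, h3.2, hμI0, hε]

end MCT
section RunMin

open BoxIntegral MeasureTheory IntegrationParams

/-- Running minimum of `f j, f (j+1), ..., f (j+n)`. -/
noncomputable def runMin (f : ℕ → (ι → ℝ) → ℝ) (j : ℕ) : ℕ → (ι → ℝ) → ℝ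
  | 0 => f j
  | n+1 => fun x => min (runMin f j n x) (f (j+n+1) x)

variable {f : ℕ → (ι → ℝ) → ℝ} {j n : ℕ} {x : ι → ℝ}

lemma runMin_succ (f : ℕ → (ι → ℝ) → ℝ) (j n : ℕ) (x : ι → ℝ) :
    runMin f j (n+1) x = min (runMin f j n x) (f (j+n+1) x) := rfl

lemma runMin_zero (f : ℕ → (ι → ℝ) → ℝ) (j : ℕ) (x : ι → ℝ) :
    runMin f j 0 x = f j x := rfl

lemma runMin_le_self : ∀ n, runMin f j n x ≤ f j x := by
  intro n
  induction n with
  | zero => exact le_rfl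
  | succ n ih => exact (min_le_left _ _).trans ih

lemma le_runMin {c : ℝ} (h : ∀ k, j ≤ k → c ≤ f k x) : ∀ n, c ≤ runMin f j n x := by
  intro n
  induction n with
  | zero => exact h j le_rfl
  | succ n ih => exact le_min ih (h _ (by omega))

lemma runMin_anti : ∀ n, runMin f j (n+1) x ≤ runMin f j n x :=
  fun n => min_le_left _ _

lemma runMin_bounds {F ε : ℝ} (h : ∀ k, j ≤ k → F - ε ≤ f k x ∧ f k x ≤ F + ε) :
    ∀ n, F - ε ≤ runMin f j n x ∧ runMin f j n x ≤ F + ε := by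
  intro n
  refine ⟨le_runMin (fun k hk => (h k hk).1) n, ?_⟩
  exact (runMin_le_self n).trans (h j le_rfl).2

lemma runMin_succ_shift (f : ℕ → (ι → ℝ) → ℝ) :
    ∀ (n j : ℕ) (x : ι → ℝ), runMin f j (n+1) x = min (f j x) (runMin f (j+1) n x) := by
  intro n
  induction n with
  | zero => intro j x; rw [runMin_succ, runMin_zero, runMin_zero]
  | succ n ih =>
    intro j x
    rw [runMin_succ, ih j x, min_assoc, runMin_succ]
    have hjn : j + (n + 1) + 1 = j + 1 + n + 1 := by omega
    rw [hjn]

variable {J₀ : Box ι}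

lemma runMin_integrable {g₁ g₂ : (ι → ℝ) → ℝ}
    (hfi : ∀ k, Integrable J₀ Henstock (f k) BoxAdditiveMap.volume)
    (hG : Integrable J₀ Henstock (fun x => g₂ x - g₁ x) BoxAdditiveMap.volume)
    (hb : ∀ k, ∀ x ∈ Box.Icc J₀, g₁ x ≤ f k x ∧ f k x ≤ g₂ x) :
    ∀ n, Integrable J₀ Henstock (runMin f j n) BoxAdditiveMap.volume := by
  intro n
  induction n with
  | zero => exact hfi j
  | succ n ih =>
    have hbd : ∀ x ∈ Box.Icc J₀, g₁ x ≤ runMin f j n x ∧ runMin f j n x ≤ g₂ x := by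
      intro x hx
      constructor
      · exact le_runMin (fun k _ => (hb k x hx).1) n
      · exact (runMin_le_self n).trans (hb j x hx).2
    have := integrable_min (f := runMin f j n) (g := f (j+n+1)) ih (hfi (j+n+1)) hG
      (fun x hx => by
        have h1 := hbd x hx
        have h2 := hb (j+n+1) x hx
        rw [abs_le]
        constructor <;> linarith)
    have he : (fun x => min (runMin f j n x) (f (j+n+1) x)) = runMin f j (n+1) := rfl
    rwa [he] at this

/-- the ∃-versions of monotone convergence -/
theorem mct_mono_exists {φ : ℕ → (ι → ℝ) → ℝ} {Φ : (ι → ℝ) → ℝ}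
    (hint : ∀ n, Integrable J₀ Henstock (φ n) BoxAdditiveMap.volume)
    (hmono : ∀ x ∈ Box.Icc J₀, Monotone fun n => φ n x)
    (hconv : ∀ x ∈ Box.Icc J₀, Filter.Tendsto (fun n => φ n x) Filter.atTop (nhds (Φ x)))
    (hbdd : BddAbove (Set.range fun n =>
      integral J₀ Henstock (φ n) BoxAdditiveMap.volume)) :
    ∃ L, HasIntegral J₀ Henstock Φ BoxAdditiveMap.volume L ∧
      Filter.Tendsto (fun n => integral J₀ Henstock (φ n) BoxAdditiveMap.volume)
        Filter.atTop (nhds L) := by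
  refine ⟨_, mct_mono hint hmono hconv hbdd, ?_⟩
  exact tendsto_atTop_ciSup
    (fun m n hmn => integral_mono' (hint m) (hint n) (fun x hx => hmono x hx hmn)) hbdd

theorem mct_anti_exists {φ : ℕ → (ι → ℝ) → ℝ} {Φ : (ι → ℝ) → ℝ}
    (hint : ∀ n, Integrable J₀ Henstock (φ n) BoxAdditiveMap.volume)
    (hanti : ∀ x ∈ Box.Icc J₀, Antitone fun n => φ n x)
    (hconv : ∀ x ∈ Box.Icc J₀, Filter.Tendsto (fun n => φ n x) Filter.atTop (nhds (Φ x)))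
    (hbdd : BddBelow (Set.range fun n =>
      integral J₀ Henstock (φ n) BoxAdditiveMap.volume)) :
    ∃ L, HasIntegral J₀ Henstock Φ BoxAdditiveMap.volume L ∧
      Filter.Tendsto (fun n => integral J₀ Henstock (φ n) BoxAdditiveMap.volume)
        Filter.atTop (nhds L) := by
  have hint' : ∀ n, Integrable J₀ Henstock (fun x => -(φ n x)) BoxAdditiveMap.volume :=
    fun n => (hint n).neg
  have hmono' : ∀ x ∈ Box.Icc J₀, Monotone fun n => -(φ n x) :=
    fun x hx m n hmn => neg_le_neg (hanti x hx hmn)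
  have hconv' : ∀ x ∈ Box.Icc J₀,
      Filter.Tendsto (fun n => -(φ n x)) Filter.atTop (nhds (-(Φ x))) :=
    fun x hx => (hconv x hx).neg
  have heq : ∀ n, integral J₀ Henstock (fun x => -(φ n x)) BoxAdditiveMap.volume =
      -(integral J₀ Henstock (φ n) BoxAdditiveMap.volume) := by
    intro n
    have : (fun x => -(φ n x)) = -(φ n) := rfl
    rw [this, BoxIntegral.integral_neg]
  have hbdd' : BddAbove (Set.range fun n =>
      integral J₀ Henstock (fun x => -(φ n x)) BoxAdditiveMap.volume) := by
    obtain ⟨b, hb⟩ := hbdd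
    refine ⟨-b, ?_⟩
    rintro v ⟨n, rfl⟩
    dsimp only
    rw [heq n]
    exact neg_le_neg (hb ⟨n, rfl⟩)
  obtain ⟨L, hL1, hL2⟩ := mct_mono_exists hint' hmono' hconv' hbdd'
  refine ⟨-L, ?_, ?_⟩
  · have h := hL1.neg
    have he : (-(fun x => -(Φ x)) : (ι → ℝ) → ℝ) = Φ := by
      funext x; simp
    rwa [he] at h
  · have h2 := hL2.congr heq
    have h3 := h2.neg
    simpa using h3

end RunMin
section Envelope

open BoxIntegral MeasureTheory IntegrationParams

variable {J₀ : Box ι}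

theorem lower_envelope {f : ℕ → (ι → ℝ) → ℝ} {g₁ g₂ : (ι → ℝ) → ℝ}
    (hfi : ∀ k, Integrable J₀ Henstock (f k) BoxAdditiveMap.volume)
    (hg₁ : Integrable J₀ Henstock g₁ BoxAdditiveMap.volume)
    (hg₂ : Integrable J₀ Henstock g₂ BoxAdditiveMap.volume)
    (hb : ∀ k, ∀ x ∈ Box.Icc J₀, g₁ x ≤ f k x ∧ f k x ≤ g₂ x) :
    ∃ (ψ : ℕ → (ι → ℝ) → ℝ) (Ψ : (ι → ℝ) → ℝ) (L : ℝ),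
      (∀ j, Integrable J₀ Henstock (ψ j) BoxAdditiveMap.volume) ∧
      (∀ j, ∀ x ∈ Box.Icc J₀, ψ j x ≤ f j x) ∧
      HasIntegral J₀ Henstock Ψ BoxAdditiveMap.volume L ∧
      Filter.Tendsto (fun j => integral J₀ Henstock (ψ j) BoxAdditiveMap.volume)
        Filter.atTop (nhds L) ∧
      (∀ x ∈ Box.Icc J₀, ∀ Fx : ℝ,
        Filter.Tendsto (fun k => f k x) Filter.atTop (nhds Fx) → Ψ x = Fx) := by
  have hG : Integrable J₀ Henstock (fun x => g₂ x - g₁ x) BoxAdditiveMap.volume :=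
    hg₂.sub hg₁
  have hrm : ∀ j n, Integrable J₀ Henstock (runMin f j n) BoxAdditiveMap.volume :=
    fun j => runMin_integrable hfi hG hb
  set ψ : ℕ → (ι → ℝ) → ℝ := fun j x => ⨅ n, runMin f j n x with hψ
  have hbdd : ∀ j, ∀ x ∈ Box.Icc J₀, BddBelow (Set.range fun n => runMin f j n x) := by
    intro j x hx
    exact ⟨g₁ x, by rintro v ⟨n, rfl⟩; exact le_runMin (fun k _ => (hb k x hx).1) n⟩
  have hanti : ∀ (j : ℕ) (x : ι → ℝ), Antitone fun n => runMin f j n x := fun j x =>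
    antitone_nat_of_succ_le fun n => runMin_anti n
  have hψle : ∀ j, ∀ x ∈ Box.Icc J₀, ψ j x ≤ f j x := by
    intro j x hx
    exact (ciInf_le (hbdd j x hx) 0).trans le_rfl
  have hg₁ψ : ∀ j, ∀ x ∈ Box.Icc J₀, g₁ x ≤ ψ j x := by
    intro j x hx
    exact le_ciInf fun n => le_runMin (fun k _ => (hb k x hx).1) n
  have hψconv : ∀ j, ∀ x ∈ Box.Icc J₀,
      Filter.Tendsto (fun n => runMin f j n x) Filter.atTop (nhds (ψ j x)) :=
    fun j x hx => tendsto_atTop_ciInf (hanti j x) (hbdd j x hx)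
  -- integrability of ψ j via decreasing MCT
  have hψint : ∀ j, Integrable J₀ Henstock (ψ j) BoxAdditiveMap.volume := by
    intro j
    have hbI : BddBelow (Set.range fun n =>
        integral J₀ Henstock (runMin f j n) BoxAdditiveMap.volume) := by
      refine ⟨integral J₀ Henstock g₁ BoxAdditiveMap.volume, ?_⟩
      rintro v ⟨n, rfl⟩
      exact integral_mono' hg₁ (hrm j n)
        (fun x hx => le_runMin (fun k _ => (hb k x hx).1) n)
    obtain ⟨Lj, hLj, -⟩ := mct_anti_exists (hrm j) (fun x _ => hanti j x)
      (fun x hx => hψconv j x hx) hbI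
    exact hLj.integrable
  -- monotonicity in j
  have hψmono : ∀ x ∈ Box.Icc J₀, Monotone fun j => ψ j x := by
    intro x hx
    refine monotone_nat_of_le_succ fun j => ?_
    refine le_ciInf fun n => ?_
    have h1 : ψ j x ≤ runMin f j (n+1) x := ciInf_le (hbdd j x hx) (n+1)
    have h2 : runMin f j (n+1) x ≤ runMin f (j+1) n x := by
      rw [runMin_succ_shift]
      exact min_le_right _ _
    exact h1.trans h2
  set Ψ : (ι → ℝ) → ℝ := fun x => ⨆ j, ψ j x with hΨ
  have hΨbdd : ∀ x ∈ Box.Icc J₀, BddAbove (Set.range fun j => ψ j x) := by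
    intro x hx
    exact ⟨g₂ x, by rintro v ⟨j, rfl⟩; exact (hψle j x hx).trans (hb j x hx).2⟩
  have hΨconv : ∀ x ∈ Box.Icc J₀,
      Filter.Tendsto (fun j => ψ j x) Filter.atTop (nhds (Ψ x)) :=
    fun x hx => tendsto_atTop_ciSup (hψmono x hx) (hΨbdd x hx)
  have hbI2 : BddAbove (Set.range fun j =>
      integral J₀ Henstock (ψ j) BoxAdditiveMap.volume) := by
    refine ⟨integral J₀ Henstock g₂ BoxAdditiveMap.volume, ?_⟩
    rintro v ⟨j, rfl⟩
    exact integral_mono' (hψint j) hg₂ (fun x hx => (hψle j x hx).trans (hb j x hx).2)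
  obtain ⟨L, hL1, hL2⟩ := mct_mono_exists hψint hψmono hΨconv hbI2
  refine ⟨ψ, Ψ, L, hψint, hψle, hL1, hL2, ?_⟩
  -- identification of Ψ with the pointwise limit
  intro x hx Fx hFx
  have key : ∀ ε : ℝ, 0 < ε → Ψ x ≤ Fx + ε ∧ Fx - ε ≤ Ψ x := by
    intro ε hε
    obtain ⟨K, hK⟩ := Metric.tendsto_atTop.1 hFx ε hε
    have hwin : ∀ k, K ≤ k → Fx - ε ≤ f k x ∧ f k x ≤ Fx + ε := by
      intro k hk
      have := hK k hk
      rw [Real.dist_eq, abs_lt] at this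
      exact ⟨by linarith [this.1], by linarith [this.2]⟩
    have hψwin : ∀ j, K ≤ j → Fx - ε ≤ ψ j x ∧ ψ j x ≤ Fx + ε := by
      intro j hj
      have hw : ∀ k, j ≤ k → Fx - ε ≤ f k x ∧ f k x ≤ Fx + ε :=
        fun k hk => hwin k (le_trans hj hk)
      constructor
      · exact le_ciInf fun n => (runMin_bounds hw n).1
      · exact (ciInf_le (hbdd j x hx) 0).trans (hw j le_rfl).2
    constructor
    · refine ciSup_le fun j => ?_
      calc ψ j x ≤ ψ (max j K) x := hψmono x hx (le_max_left _ _)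
        _ ≤ Fx + ε := (hψwin _ (le_max_right _ _)).2
    · calc Fx - ε ≤ ψ K x := (hψwin K le_rfl).1
        _ ≤ Ψ x := le_ciSup (hΨbdd x hx) K
  have h1 : Ψ x ≤ Fx := by
    refine le_of_forall_pos_le_add fun ε hε => ?_
    exact (key ε hε).1
  have h2 : Fx ≤ Ψ x := by
    refine le_of_forall_pos_le_add fun ε hε => ?_
    linarith [(key ε hε).2]
  linarith

end Envelope
/-- **Dominated convergence for gauge integrals.** -/
theorem dominated_convergence_hk (I : Brick ι) (g₁ g₂ F : (ι → ℝ) → ℝ)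
    (f : ℕ → (ι → ℝ) → ℝ) (G₁ G₂ : ℝ) (A : ℕ → ℝ)
    (hg₁ : HasHK I g₁ G₁) (hg₂ : HasHK I g₂ G₂) (hf : ∀ j, HasHK I (f j) (A j))
    (hle : ∀ j, ∀ P ∈ I.toSet, g₁ P ≤ f j P ∧ f j P ≤ g₂ P)
    (X : Set (ι → ℝ)) (hX : mustar I X = 0)
    (hconv : ∀ P ∈ I.toSet, P ∉ X →
      Filter.Tendsto (fun j => f j P) Filter.atTop (nhds (F P))) :
    ∃ L : ℝ, HasHK I F L ∧ Filter.Tendsto A Filter.atTop (nhds L) := by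
  classical
  open BoxIntegral MeasureTheory IntegrationParams in
  have Hg₁ : HasIntegral I.box Henstock g₁ BoxAdditiveMap.volume G₁ :=
    hasHK_iff_hasIntegral.1 hg₁
  have Hg₂ : HasIntegral I.box Henstock g₂ BoxAdditiveMap.volume G₂ :=
    hasHK_iff_hasIntegral.1 hg₂
  have Hf : ∀ j, HasIntegral I.box Henstock (f j) BoxAdditiveMap.volume (A j) :=
    fun j => hasHK_iff_hasIntegral.1 (hf j)
  have hIcc : Box.Icc I.box = I.toSet := Brick.Icc_box I
  have hb : ∀ k, ∀ x ∈ Box.Icc I.box, g₁ x ≤ f k x ∧ f k x ≤ g₂ x := by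
    intro k x hx
    rw [hIcc] at hx
    exact hle k x hx
  obtain ⟨ψ, Ψ, L₁, hψint, hψle, HΨ, hψtend, hΨeq⟩ :=
    lower_envelope (fun k => (Hf k).integrable) Hg₁.integrable Hg₂.integrable hb
  obtain ⟨ψ', Ψ', L₂, hψ'int, hψ'le, HΨ', hψ'tend, hΨ'eq⟩ :=
    lower_envelope (f := fun k x => -(f k x)) (g₁ := fun x => -(g₂ x))
      (g₂ := fun x => -(g₁ x))
      (fun k => (Hf k).integrable.neg) Hg₂.integrable.neg Hg₁.integrable.neg
      (fun k x hx => ⟨neg_le_neg (hb k x hx).2, neg_le_neg (hb k x hx).1⟩)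
  have hAeq : ∀ j, A j = integral I.box Henstock (f j) BoxAdditiveMap.volume :=
    fun j => ((Hf j).integral_eq).symm
  have hneg_int : ∀ j,
      integral I.box Henstock (fun x => -(f j x)) BoxAdditiveMap.volume =
        -(integral I.box Henstock (f j) BoxAdditiveMap.volume) := by
    intro j
    have he : (fun x => -(f j x)) = -(f j) := rfl
    rw [he, BoxIntegral.integral_neg]
  -- the two envelopes have opposite integrals
  have hzero1 : HasIntegral I.box Henstock (fun x => Ψ x + Ψ' x)
      BoxAdditiveMap.volume 0 := by
    refine hasIntegral_zero_of_mustar_zero hX ?_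
    intro x hx hxX
    have hx' : x ∈ Box.Icc I.box := by rwa [hIcc]
    have h1 := hΨeq x hx' (F x) (hconv x hx hxX)
    have h2 := hΨ'eq x hx' (-(F x)) ((hconv x hx hxX).neg)
    rw [h1, h2]
    ring
  have hsum : HasIntegral I.box Henstock (Ψ + Ψ') BoxAdditiveMap.volume (L₁ + L₂) :=
    HΨ.add HΨ'
  have hL12 : L₁ + L₂ = 0 := hsum.unique hzero1
  -- squeeze for the integrals
  have hlow : ∀ j, integral I.box Henstock (ψ j) BoxAdditiveMap.volume ≤ A j := by
    intro j
    rw [hAeq j]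
    exact integral_mono' (hψint j) (Hf j).integrable (fun x hx => hψle j x hx)
  have hup : ∀ j, A j ≤ -(integral I.box Henstock (ψ' j) BoxAdditiveMap.volume) := by
    intro j
    have h3 : integral I.box Henstock (ψ' j) BoxAdditiveMap.volume ≤
        integral I.box Henstock (fun x => -(f j x)) BoxAdditiveMap.volume :=
      integral_mono' (hψ'int j) (Hf j).integrable.neg (fun x hx => hψ'le j x hx)
    rw [hneg_int j, ← hAeq j] at h3
    linarith
  have hL2' : -L₂ = L₁ := by linarith
  have huptend : Filter.Tendsto
      (fun j => -(integral I.box Henstock (ψ' j) BoxAdditiveMap.volume))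
      Filter.atTop (nhds L₁) := by
    rw [← hL2']
    exact hψ'tend.neg
  have hAtend : Filter.Tendsto A Filter.atTop (nhds L₁) :=
    tendsto_of_tendsto_of_tendsto_of_le_of_le hψtend huptend hlow hup
  -- HK-integrability of F
  have hzero2 : HasIntegral I.box Henstock (fun x => F x - Ψ x)
      BoxAdditiveMap.volume 0 := by
    refine hasIntegral_zero_of_mustar_zero hX ?_
    intro x hx hxX
    have hx' : x ∈ Box.Icc I.box := by rwa [hIcc]
    have h1 := hΨeq x hx' (F x) (hconv x hx hxX)
    rw [h1]
    ring
  have hFint : HasIntegral I.box Henstock F BoxAdditiveMap.volume L₁ := by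
    have h4 := HΨ.add hzero2
    have he : (Ψ + fun x => F x - Ψ x) = F := by
      funext x
      show Ψ x + (F x - Ψ x) = F x
      ring
    rw [he, add_zero] at h4
    exact h4
  exact ⟨L₁, hasHK_iff_hasIntegral.2 hFint, hAtend⟩
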